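/- Let (Ω, F, P) be a probability space, A* : Ω → ℝ and W : Ω → ℝ^d square-integrable random variables, and ε_A, ε_M real random variables with ε_A ~ N(0, σγ²) and ε_M ~ N(0, σα²), σγ², σα² > 0, ε_A and ε_M independent of each other and the pair (ε_A, ε_M) independent of (A*, W). Define A = γ₀ + γ₁A* + γ₂ᵀW + ε_A, M = α₀ + α₁A + α₂ᵀW + ε_M, and D = α₁²σγ² + σα². Then the conditional variance of A given (A*, M, W) is constant: almost surely, E[(A − E[A | σ(A*, M, W)])² | σ(A*, M, W)] = σα²σγ²/D. -/

import Mathlib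

set_option maxHeartbeats 1000000
open MeasureTheory ProbabilityTheory Real
open scoped NNReal ENNReal

namespace Stmt8Aux

lemma mk_ne_zero {x : ℝ} (hx : 0 < x) (h0 : 0 ≤ x) : (⟨x, h0⟩ : ℝ≥0) ≠ 0 :=
  fun hc => hx.ne' (congrArg (fun y : ℝ≥0 => (y : ℝ)) hc)

lemma integral_x_mul_exp (b : ℝ) : ∫ x : ℝ, x * rexp (-b * x ^ 2) = 0 := by
  have h := integral_neg_eq_self (fun x : ℝ => x * rexp (-b * x ^ 2)) volume
  simp only [neg_neg, neg_sq, neg_mul, integral_neg] at h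
  simp only [neg_mul]
  linarith [h]

lemma integrable_sq_mul_exp {b : ℝ} (hb : 0 < b) :
    Integrable (fun x : ℝ => x ^ 2 * rexp (-b * x ^ 2)) := by
  have := integrable_rpow_mul_exp_neg_mul_sq hb (by norm_num : (-1 : ℝ) < 2)
  simpa [show ((2 : ℕ) : ℝ) = (2 : ℝ) by norm_num, Real.rpow_natCast] using this

lemma integral_sq_mul_exp {b : ℝ} (hb : 0 < b) :
    ∫ x : ℝ, x ^ 2 * rexp (-b * x ^ 2) = (2 * b)⁻¹ * Real.sqrt (π / b) := by
  have hu : ∀ x : ℝ, HasDerivAt (fun y : ℝ => y) 1 x := fun x => hasDerivAt_id x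
  have hv : ∀ x : ℝ, HasDerivAt (fun y : ℝ => -(2 * b)⁻¹ * rexp (-b * y ^ 2))
      (x * rexp (-b * x ^ 2)) x := by
    intro x
    have h1 : HasDerivAt (fun y : ℝ => -b * y ^ 2) (-b * (2 * x)) x := by
      simpa using ((hasDerivAt_pow 2 x).const_mul (-b))
    have h2 := (h1.exp).const_mul (-(2 * b)⁻¹)
    convert h2 using 1
    show x * rexp (-b * x ^ 2) = -(2 * b)⁻¹ * (rexp (-b * x ^ 2) * (-b * (2 * x)))
    field_simp
    all_goals rfl
  have hI1 : Integrable ((fun y : ℝ => y) * fun x : ℝ => x * rexp (-b * x ^ 2)) := by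
    have := integrable_sq_mul_exp hb
    apply this.congr
    · filter_upwards with x; simp [Pi.mul_apply]; ring
  have hI2 : Integrable ((fun _ : ℝ => (1 : ℝ)) * fun y : ℝ => -(2 * b)⁻¹ * rexp (-b * y ^ 2)) := by
    have := (integrable_exp_neg_mul_sq hb).const_mul (-(2 * b)⁻¹)
    apply this.congr
    filter_upwards with x; simp [Pi.mul_apply]
  have hI3 : Integrable ((fun y : ℝ => y) * fun y : ℝ => -(2 * b)⁻¹ * rexp (-b * y ^ 2)) := by
    have := (integrable_mul_exp_neg_mul_sq hb).const_mul (-(2 * b)⁻¹)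
    apply this.congr
    filter_upwards with x; simp [Pi.mul_apply]; ring
  have key := integral_mul_deriv_eq_deriv_mul_of_integrable (fun x _ => hu x) (fun x _ => hv x) hI1 hI2 hI3
  have h2 : ∫ x : ℝ, x * (x * rexp (-b * x ^ 2)) = ∫ x : ℝ, x ^ 2 * rexp (-b * x ^ 2) := by
    congr 1; funext x; ring
  rw [h2] at key
  rw [key]
  have : ∫ x : ℝ, (1 : ℝ) * (-(2 * b)⁻¹ * rexp (-b * x ^ 2))
      = -(2 * b)⁻¹ * ∫ x : ℝ, rexp (-b * x ^ 2) := by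
    rw [← integral_const_mul]; congr 1; funext x; ring
  rw [this, integral_gaussian]
  ring


lemma gaussianPDFReal_zero_eq (v : ℝ≥0) :
    gaussianPDFReal 0 v = fun x => (Real.sqrt (2 * π * v))⁻¹ * rexp (-(2 * (v : ℝ))⁻¹ * x ^ 2) := by
  funext x
  rw [gaussianPDFReal]
  rw [sub_zero]
  congr 1
  rw [div_eq_mul_inv]
  ring

lemma gaussianReal_as_withDensity {v : ℝ≥0} (hv : v ≠ 0) :
    gaussianReal 0 v
      = volume.withDensity (fun x => ((Real.toNNReal (gaussianPDFReal 0 v x) : ℝ≥0) : ℝ≥0∞)) := by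
  rw [gaussianReal_of_var_ne_zero _ hv]
  rfl

lemma measurable_toNNReal_pdf (v : ℝ≥0) :
    Measurable (fun x => (Real.toNNReal (gaussianPDFReal 0 v x))) :=
  (measurable_gaussianPDFReal 0 v).real_toNNReal

lemma integral_gaussianReal_eq {v : ℝ≥0} (hv : v ≠ 0) (g : ℝ → ℝ) :
    ∫ x, g x ∂(gaussianReal 0 v) = ∫ x, gaussianPDFReal 0 v x * g x := by
  rw [gaussianReal_as_withDensity hv,
    integral_withDensity_eq_integral_smul (measurable_toNNReal_pdf v) g]
  congr 1
  funext x
  rw [NNReal.smul_def, Real.coe_toNNReal _ (gaussianPDFReal_nonneg 0 v x), smul_eq_mul]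

lemma integrable_gaussianReal_iff {v : ℝ≥0} (hv : v ≠ 0) {g : ℝ → ℝ} :
    Integrable g (gaussianReal 0 v) ↔ Integrable (fun x => gaussianPDFReal 0 v x * g x) := by
  rw [gaussianReal_as_withDensity hv,
    integrable_withDensity_iff_integrable_smul (measurable_toNNReal_pdf v)]
  constructor <;> intro h <;> apply h.congr <;> filter_upwards with x <;>
    rw [NNReal.smul_def, Real.coe_toNNReal _ (gaussianPDFReal_nonneg 0 v x), smul_eq_mul]

lemma integrable_id_gaussianReal (v : ℝ≥0) :
    Integrable (fun x : ℝ => x) (gaussianReal 0 v) := by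
  by_cases hv : v = 0
  · rw [hv, gaussianReal_zero_var]
    refine ⟨measurable_id.aestronglyMeasurable, ?_⟩
    rw [HasFiniteIntegral, lintegral_dirac]
    exact ENNReal.coe_lt_top
  · rw [integrable_gaussianReal_iff hv, gaussianPDFReal_zero_eq]
    have hb : 0 < (2 * (v : ℝ))⁻¹ := by
      have : (0 : ℝ) < v := lt_of_le_of_ne (v.coe_nonneg) (by exact_mod_cast (Ne.symm hv))
      positivity
    have := (integrable_mul_exp_neg_mul_sq hb).const_mul (Real.sqrt (2 * π * v))⁻¹
    apply this.congr
    filter_upwards with x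
    ring

lemma integrable_sq_gaussianReal (v : ℝ≥0) :
    Integrable (fun x : ℝ => x ^ 2) (gaussianReal 0 v) := by
  by_cases hv : v = 0
  · rw [hv, gaussianReal_zero_var]
    refine ⟨(measurable_id.pow_const 2).aestronglyMeasurable, ?_⟩
    rw [HasFiniteIntegral, lintegral_dirac]
    exact ENNReal.coe_lt_top
  · rw [integrable_gaussianReal_iff hv, gaussianPDFReal_zero_eq]
    have hvpos : (0 : ℝ) < v := lt_of_le_of_ne (v.coe_nonneg) (by exact_mod_cast (Ne.symm hv))
    have hb : 0 < (2 * (v : ℝ))⁻¹ := by positivity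
    have : Integrable (fun x : ℝ => x ^ 2 * rexp (-(2 * (v : ℝ))⁻¹ * x ^ 2)) := by
      have := integrable_rpow_mul_exp_neg_mul_sq hb (by norm_num : (-1 : ℝ) < 2)
      simpa [show ((2 : ℕ) : ℝ) = (2 : ℝ) by norm_num, Real.rpow_natCast] using this
    have h2 := this.const_mul (Real.sqrt (2 * π * v))⁻¹
    apply h2.congr
    filter_upwards with x
    ring



lemma integral_sq_gaussianReal (v : ℝ≥0) :
    ∫ x, x ^ 2 ∂(gaussianReal 0 v) = v := by
  by_cases hv : v = 0
  · simp [hv, gaussianReal_zero_var]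
  · rw [integral_gaussianReal_eq hv, gaussianPDFReal_zero_eq]
    have hvpos : (0 : ℝ) < v := lt_of_le_of_ne (v.coe_nonneg) (by exact_mod_cast (Ne.symm hv))
    have hb : 0 < (2 * (v : ℝ))⁻¹ := by positivity
    have h1 : ∫ x : ℝ, (Real.sqrt (2 * π * v))⁻¹ * rexp (-(2 * (v:ℝ))⁻¹ * x ^ 2) * x ^ 2
        = (Real.sqrt (2 * π * v))⁻¹ * ∫ x : ℝ, x ^ 2 * rexp (-(2 * (v:ℝ))⁻¹ * x ^ 2) := by
      rw [← integral_const_mul]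
      congr 1; funext x; ring
    rw [h1, integral_sq_mul_exp hb]
    have h2 : (2 * (2 * (v:ℝ))⁻¹)⁻¹ = v := by
      field_simp
    have h3 : π / (2 * (v:ℝ))⁻¹ = 2 * π * v := by
      field_simp
    rw [h2, h3]
    have h4 : Real.sqrt (2 * π * v) ≠ 0 := by
      refine Real.sqrt_ne_zero'.mpr ?_
      positivity
    field_simp

lemma integral_id_gaussianReal' (v : ℝ≥0) :
    ∫ x, x ∂(gaussianReal 0 v) = 0 := by
  by_cases hv : v = 0
  · simp [hv, gaussianReal_zero_var]
  · rw [integral_gaussianReal_eq hv, gaussianPDFReal_zero_eq]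
    have h1 : ∫ x : ℝ, (Real.sqrt (2 * π * v))⁻¹ * rexp (-(2 * (v:ℝ))⁻¹ * x ^ 2) * x
        = (Real.sqrt (2 * π * v))⁻¹ * ∫ x : ℝ, x * rexp (-(2 * (v:ℝ))⁻¹ * x ^ 2) := by
      rw [← integral_const_mul]
      congr 1; funext x; ring
    rw [h1, integral_x_mul_exp, mul_zero]


noncomputable def φmap (a k : ℝ) : ℝ × ℝ → ℝ × ℝ :=
  fun p => (p.1 - k * (a * p.1 + p.2), a * p.1 + p.2)

noncomputable def ψmap (a k : ℝ) : ℝ × ℝ → ℝ × ℝ :=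
  fun q => (q.1 + k * q.2, q.2 - a * (q.1 + k * q.2))

lemma measurable_φmap (a k : ℝ) : Measurable (φmap a k) := by
  unfold φmap; fun_prop

lemma measurable_ψmap (a k : ℝ) : Measurable (ψmap a k) := by
  unfold ψmap; fun_prop

lemma ψmap_φmap (a k : ℝ) (p : ℝ × ℝ) : ψmap a k (φmap a k p) = p := by
  unfold φmap ψmap
  ext <;> simp <;> ring_nf

lemma measurePreserving_φmap (a k : ℝ) :
    MeasurePreserving (φmap a k)
      ((volume : Measure ℝ).prod (volume : Measure ℝ))
      ((volume : Measure ℝ).prod (volume : Measure ℝ)) := by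
  have h1 : MeasurePreserving (fun p : ℝ × ℝ => (p.1, a * p.1 + p.2))
      (volume.prod volume) (volume.prod volume) := by
    refine (MeasurePreserving.id volume).skew_product (g := fun x y => a * x + y) ?_ ?_
    · fun_prop
    · filter_upwards with x
      exact (measurePreserving_add_left volume (a * x)).map_eq
  have h3 : MeasurePreserving (fun q : ℝ × ℝ => (q.1 - k * q.2, q.2))
      (volume.prod volume) (volume.prod volume) := by
    have hsw : MeasurePreserving (Prod.swap : ℝ × ℝ → ℝ × ℝ)
        (volume.prod volume) (volume.prod volume) := Measure.measurePreserving_swap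
    have hmid : MeasurePreserving (fun p : ℝ × ℝ => (p.1, (-k) * p.1 + p.2))
        (volume.prod volume) (volume.prod volume) := by
      refine (MeasurePreserving.id volume).skew_product (g := fun x y => (-k) * x + y) ?_ ?_
      · fun_prop
      · filter_upwards with x
        exact (measurePreserving_add_left volume ((-k) * x)).map_eq
    have := hsw.comp (hmid.comp hsw)
    convert this using 1
    funext p
    simp [Prod.swap, Function.comp]
    ring
  have := h3.comp h1
  convert this using 1
  rfl

lemma map_withDensity_eq {μ : Measure (ℝ × ℝ)} [SigmaFinite μ] {Φ Ψ : ℝ × ℝ → ℝ × ℝ}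
    (hΦ : MeasurePreserving Φ μ μ) (hΨ : Measurable Ψ)
    (hinv : ∀ p, Ψ (Φ p) = p) {h : ℝ × ℝ → ℝ≥0∞} (hh : Measurable h) :
    Measure.map Φ (μ.withDensity h) = μ.withDensity (fun q => h (Ψ q)) := by
  ext s hs
  rw [Measure.map_apply hΦ.measurable hs, withDensity_apply _ (hΦ.measurable hs),
    withDensity_apply _ hs]
  have : ∫⁻ q in s, h (Ψ q) ∂μ = ∫⁻ q in s, h (Ψ q) ∂(Measure.map Φ μ) := by
    rw [hΦ.map_eq]
  have h2 := setLIntegral_map (μ := μ) hs (hh.comp hΨ) hΦ.measurable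
  simp only [Function.comp_apply] at h2
  rw [this, h2]
  refine setLIntegral_congr_fun (hΦ.measurable hs) ?_
  intro x _
  exact (congrArg h (hinv x)).symm


lemma gaussian_prod_eq_withDensity {v1 v2 : ℝ≥0} (h1 : v1 ≠ 0) (h2 : v2 ≠ 0) :
    (gaussianReal 0 v1).prod (gaussianReal 0 v2)
      = ((volume : Measure ℝ).prod volume).withDensity
          (fun p => gaussianPDF 0 v1 p.1 * gaussianPDF 0 v2 p.2) := by
  refine Measure.prod_eq fun s t hs ht => ?_
  rw [withDensity_apply _ (hs.prod ht), ← Measure.prod_restrict,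
    lintegral_prod_mul ((measurable_gaussianPDF 0 v1).aemeasurable)
      ((measurable_gaussianPDF 0 v2).aemeasurable),
    gaussianReal_apply _ h1, gaussianReal_apply _ h2]

lemma exp_identity (σγ σα a : ℝ) (hσγ : 0 < σγ) (hσα : 0 < σα) (r s : ℝ) :
    gaussianPDFReal 0 ⟨σγ, hσγ.le⟩ (r + (a * σγ / (a ^ 2 * σγ + σα)) * s)
      * gaussianPDFReal 0 ⟨σα, hσα.le⟩
        (s - a * (r + (a * σγ / (a ^ 2 * σγ + σα)) * s))
    = gaussianPDFReal 0 ⟨σα * σγ / (a ^ 2 * σγ + σα), by positivity⟩ r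
      * gaussianPDFReal 0 ⟨a ^ 2 * σγ + σα, by positivity⟩ s := by
  have hD : 0 < a ^ 2 * σγ + σα := by positivity
  simp only [gaussianPDFReal, NNReal.coe_mk, sub_zero, NNReal.toReal]
  rw [mul_mul_mul_comm, mul_mul_mul_comm ((√(2 * π * (σα * σγ / (a ^ 2 * σγ + σα))))⁻¹)]
  congr 1
  · rw [← mul_inv, ← mul_inv, ← Real.sqrt_mul (by positivity), ← Real.sqrt_mul (by positivity)]
    congr 2
    field_simp
  · rw [← Real.exp_add, ← Real.exp_add]
    congr 1
    field_simp
    ring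

lemma map_φmap_gaussian (σγ σα a : ℝ) (hσγ : 0 < σγ) (hσα : 0 < σα) :
    Measure.map (φmap a (a * σγ / (a ^ 2 * σγ + σα)))
        ((gaussianReal 0 ⟨σγ, hσγ.le⟩).prod (gaussianReal 0 ⟨σα, hσα.le⟩))
      = (gaussianReal 0 ⟨σα * σγ / (a ^ 2 * σγ + σα), by positivity⟩).prod
          (gaussianReal 0 ⟨a ^ 2 * σγ + σα, by positivity⟩) := by
  have hD : 0 < a ^ 2 * σγ + σα := by positivity
  have h1 : (⟨σγ, hσγ.le⟩ : ℝ≥0) ≠ 0 := mk_ne_zero hσγ _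
  have h2 : (⟨σα, hσα.le⟩ : ℝ≥0) ≠ 0 := mk_ne_zero hσα _
  have h3 : (⟨σα * σγ / (a ^ 2 * σγ + σα), by positivity⟩ : ℝ≥0) ≠ 0 :=
    mk_ne_zero (by positivity) _
  have h4 : (⟨a ^ 2 * σγ + σα, by positivity⟩ : ℝ≥0) ≠ 0 := mk_ne_zero hD _
  set k : ℝ := a * σγ / (a ^ 2 * σγ + σα) with hk
  rw [gaussian_prod_eq_withDensity h1 h2, gaussian_prod_eq_withDensity h3 h4]
  rw [map_withDensity_eq (measurePreserving_φmap a k) (measurable_ψmap a k) (ψmap_φmap a k)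
    (h := fun p => gaussianPDF 0 ⟨σγ, hσγ.le⟩ p.1 * gaussianPDF 0 ⟨σα, hσα.le⟩ p.2)
    (((measurable_gaussianPDF 0 _).comp measurable_fst).mul
      ((measurable_gaussianPDF 0 _).comp measurable_snd))]
  congr 1
  funext q
  simp only [ψmap, gaussianPDF]
  rw [← ENNReal.ofReal_mul (gaussianPDFReal_nonneg 0 ⟨σγ, hσγ.le⟩ _),
    ← ENNReal.ofReal_mul (gaussianPDFReal_nonneg 0 ⟨σα * σγ / (a ^ 2 * σγ + σα), by positivity⟩ _)]
  congr 1
  exact exp_identity σγ σα a hσγ hσα q.1 q.2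


lemma indep_mono_right {Ω : Type*} {_m0 : MeasurableSpace Ω} {P : Measure Ω}
    {m₁ m₂ m₃ : MeasurableSpace Ω} (h : Indep m₁ m₂ P) (hle : m₃ ≤ m₂) : Indep m₁ m₃ P :=
  fun t1 t2 ht1 ht2 => h t1 t2 ht1 (hle _ ht2)

lemma integrable_of_gaussian_law {Ω : Type*} [MeasurableSpace Ω] {P : Measure Ω} {X : Ω → ℝ}
    (hX : AEMeasurable X P) {v : ℝ≥0} (h : P.map X = gaussianReal 0 v) : Integrable X P := by
  have h1 : Integrable (fun x : ℝ => x) (P.map X) := by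
    rw [h]; exact integrable_id_gaussianReal v
  exact (integrable_map_measure measurable_id.aestronglyMeasurable hX).mp h1

lemma integrable_sq_of_gaussian_law {Ω : Type*} [MeasurableSpace Ω] {P : Measure Ω} {X : Ω → ℝ}
    (hX : AEMeasurable X P) {v : ℝ≥0} (h : P.map X = gaussianReal 0 v) :
    Integrable (fun ω => X ω ^ 2) P := by
  have h1 : Integrable (fun x : ℝ => x ^ 2) (P.map X) := by
    rw [h]; exact integrable_sq_gaussianReal v
  exact (integrable_map_measure (measurable_id.pow_const 2).aestronglyMeasurable hX).mp h1

lemma integral_of_gaussian_law {Ω : Type*} [MeasurableSpace Ω] {P : Measure Ω} {X : Ω → ℝ}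
    (hX : AEMeasurable X P) {v : ℝ≥0} (h : P.map X = gaussianReal 0 v) :
    ∫ ω, X ω ∂P = 0 := by
  have h1 := integral_map hX (f := fun x : ℝ => x) measurable_id.aestronglyMeasurable
  rw [h, integral_id_gaussianReal'] at h1
  exact h1.symm

lemma integral_sq_of_gaussian_law {Ω : Type*} [MeasurableSpace Ω] {P : Measure Ω} {X : Ω → ℝ}
    (hX : AEMeasurable X P) {v : ℝ≥0} (h : P.map X = gaussianReal 0 v) :
    ∫ ω, X ω ^ 2 ∂P = v := by
  have h1 := integral_map hX (f := fun x : ℝ => x ^ 2)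
    (measurable_id.pow_const 2).aestronglyMeasurable
  rw [h, integral_sq_gaussianReal] at h1
  exact h1.symm

end Stmt8Aux

open Stmt8Aux MeasureTheory ProbabilityTheory
open scoped NNReal

theorem Stmt8Aux.main
    {Ω : Type*} (G : MeasurableSpace Ω) [m0 : MeasurableSpace Ω] (P : Measure Ω)
    [IsProbabilityMeasure P]
    (d : ℕ) (Astar : Ω → ℝ) (W : Ω → Fin d → ℝ) (εA εM : Ω → ℝ)
    (hAstarMeas : Measurable Astar) (hWMeas : Measurable W)
    (hεAMeas : Measurable εA) (hεMMeas : Measurable εM)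
    (hAstarL2 : MemLp Astar 2 P) (hWL2 : MemLp W 2 P)
    (σγ2 σα2 : ℝ) (hσγ : 0 < σγ2) (hσα : 0 < σα2)
    (hlawA : P.map εA = gaussianReal 0 ⟨σγ2, hσγ.le⟩)
    (hlawM : P.map εM = gaussianReal 0 ⟨σα2, hσα.le⟩)
    (hindEps : IndepFun εA εM P)
    (hindObs : IndepFun (fun ω => (εA ω, εM ω)) (fun ω => (Astar ω, W ω)) P)
    (γ₀ γ₁ α₀ α₁ : ℝ) (γ₂ α₂ : Fin d → ℝ)
    (A M : Ω → ℝ)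
    (hA : A = fun ω => γ₀ + γ₁ * Astar ω + (∑ i, γ₂ i * W ω i) + εA ω)
    (hM : M = fun ω => α₀ + α₁ * A ω + (∑ i, α₂ i * W ω i) + εM ω)
    (D : ℝ) (hD : D = α₁ ^ 2 * σγ2 + σα2)
    (hG : G = MeasurableSpace.comap Astar inferInstance ⊔
      MeasurableSpace.comap M inferInstance ⊔ MeasurableSpace.comap W inferInstance) :
    P[fun ω => (A ω - (P[A | G]) ω) ^ 2 | G] =ᵐ[P] fun _ => σα2 * σγ2 / D := by
  subst hD
  have hD0 : (0:ℝ) < α₁ ^ 2 * σγ2 + σα2 := by positivity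
  set k : ℝ := α₁ * σγ2 / (α₁ ^ 2 * σγ2 + σα2) with hk
  have hvR0 : (0:ℝ) < σα2 * σγ2 / (α₁ ^ 2 * σγ2 + σα2) := by positivity
  set S : Ω → ℝ := fun ω => α₁ * εA ω + εM ω with hSdef
  set R : Ω → ℝ := fun ω => εA ω - k * S ω with hRdef
  have hSMeas : Measurable S := (hεAMeas.const_mul α₁).add hεMMeas
  have hRMeas : Measurable R := hεAMeas.sub (hSMeas.const_mul k)
  have hWiMeas : ∀ i, Measurable (fun ω => W ω i) :=
    fun i => (measurable_pi_apply i).comp hWMeas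
  have hAMeas : Measurable A := by
    rw [hA]
    exact ((((measurable_const.add (hAstarMeas.const_mul γ₁))).add
      (Finset.measurable_sum _ (fun i _ => (hWiMeas i).const_mul (γ₂ i)))).add hεAMeas)
  have hMMeas : Measurable M := by
    rw [hM]
    exact ((((measurable_const.add (hAMeas.const_mul α₁))).add
      (Finset.measurable_sum _ (fun i _ => (hWiMeas i).const_mul (α₂ i)))).add hεMMeas)
  have hGle : G ≤ m0 := by
    rw [hG]
    exact sup_le (sup_le hAstarMeas.comap_le hMMeas.comap_le) hWMeas.comap_le
  haveI : SigmaFinite (P.trim hGle) := inferInstance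
  -- laws
  have hpairMeas : Measurable (fun ω => (εA ω, εM ω)) := hεAMeas.prodMk hεMMeas
  have hmapPair : P.map (fun ω => (εA ω, εM ω))
      = (gaussianReal 0 ⟨σγ2, hσγ.le⟩).prod (gaussianReal 0 ⟨σα2, hσα.le⟩) := by
    rw [← hlawA, ← hlawM]
    exact (indepFun_iff_map_prod_eq_prod_map_map hεAMeas.aemeasurable
      hεMMeas.aemeasurable).mp hindEps
  have hφcomp : (fun ω => (R ω, S ω)) = (φmap α₁ k) ∘ (fun ω => (εA ω, εM ω)) := by
    funext ω
    simp only [Function.comp_apply, φmap, hRdef, hSdef]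
  have hRSMeas : Measurable (fun ω => (R ω, S ω)) := hRMeas.prodMk hSMeas
  have hmapRS : P.map (fun ω => (R ω, S ω))
      = (gaussianReal 0 ⟨σα2 * σγ2 / (α₁ ^ 2 * σγ2 + σα2), hvR0.le⟩).prod
          (gaussianReal 0 ⟨α₁ ^ 2 * σγ2 + σα2, hD0.le⟩) := by
    rw [hφcomp, ← Measure.map_map (measurable_φmap α₁ k) hpairMeas, hmapPair]
    exact map_φmap_gaussian σγ2 σα2 α₁ hσγ hσα
  haveI : IsProbabilityMeasure (gaussianReal 0 ⟨σα2 * σγ2 / (α₁ ^ 2 * σγ2 + σα2), hvR0.le⟩) :=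
    instIsProbabilityMeasureGaussianReal 0 _
  haveI : IsProbabilityMeasure (gaussianReal 0 ⟨α₁ ^ 2 * σγ2 + σα2, hD0.le⟩) :=
    instIsProbabilityMeasureGaussianReal 0 _
  have hmapR : P.map R = gaussianReal 0 ⟨σα2 * σγ2 / (α₁ ^ 2 * σγ2 + σα2), hvR0.le⟩ := by
    have h1 : R = Prod.fst ∘ (fun ω => (R ω, S ω)) := rfl
    rw [h1, ← Measure.map_map measurable_fst hRSMeas, hmapRS, Measure.map_fst_prod,
      measure_univ, one_smul]
  have hmapS : P.map S = gaussianReal 0 ⟨α₁ ^ 2 * σγ2 + σα2, hD0.le⟩ := by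
    have h1 : S = Prod.snd ∘ (fun ω => (R ω, S ω)) := rfl
    rw [h1, ← Measure.map_map measurable_snd hRSMeas, hmapRS, Measure.map_snd_prod,
      measure_univ, one_smul]
  -- independence of R and (S, Astar, W)
  set O : Ω → ℝ × (Fin d → ℝ) := fun ω => (Astar ω, W ω) with hOdef
  have hOMeas : Measurable O := hAstarMeas.prodMk hWMeas
  have hRSO : IndepFun (fun ω => (R ω, S ω)) O P := by
    have h1 := hindObs.comp (measurable_φmap α₁ k) measurable_id
    rw [hφcomp]
    exact h1
  have hSO : IndepFun S O P := by
    have h1 := hRSO.comp measurable_snd measurable_id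
    exact h1
  haveI hPO : IsProbabilityMeasure (P.map O) := Measure.isProbabilityMeasure_map hOMeas.aemeasurable
  have hmapSO : P.map (fun ω => (S ω, O ω)) = (P.map S).prod (P.map O) :=
    (indepFun_iff_map_prod_eq_prod_map_map hSMeas.aemeasurable hOMeas.aemeasurable).mp hSO
  have hmapRSO : P.map (fun ω => ((R ω, S ω), O ω))
      = ((P.map R).prod (P.map S)).prod (P.map O) := by
    rw [(indepFun_iff_map_prod_eq_prod_map_map hRSMeas.aemeasurable
      hOMeas.aemeasurable).mp hRSO, hmapRS, hmapR, hmapS]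
  set T : Ω → ℝ × (ℝ × (Fin d → ℝ)) := fun ω => (S ω, O ω) with hTdef
  have hTMeas : Measurable T := hSMeas.prodMk hOMeas
  haveI hPR : IsProbabilityMeasure (P.map R) := Measure.isProbabilityMeasure_map hRMeas.aemeasurable
  haveI hPS : IsProbabilityMeasure (P.map S) := Measure.isProbabilityMeasure_map hSMeas.aemeasurable
  have hRT : IndepFun R T P := by
    rw [indepFun_iff_map_prod_eq_prod_map_map hRMeas.aemeasurable hTMeas.aemeasurable]
    have hassoc : (fun ω => (R ω, T ω))
        = (MeasurableEquiv.prodAssoc : (ℝ × ℝ) × (ℝ × (Fin d → ℝ)) ≃ᵐ _)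
          ∘ (fun ω => ((R ω, S ω), O ω)) := rfl
    rw [hassoc, ← Measure.map_map (MeasurableEquiv.prodAssoc).measurable
      (hRSMeas.prodMk hOMeas), hmapRSO, Measure.prodAssoc_prod, hmapSO]
  have hindRG : Indep (MeasurableSpace.comap R inferInstance) G P := by
    have hle : G ≤ MeasurableSpace.comap T inferInstance := by
      rw [hG]
      refine sup_le (sup_le ?_ ?_) ?_
      · have h1 : Astar = (fun p : ℝ × (ℝ × (Fin d → ℝ)) => p.2.1) ∘ T := rfl
        rw [h1, ← MeasurableSpace.comap_comp]
        exact MeasurableSpace.comap_mono (measurable_fst.comp measurable_snd).comap_le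
      · have hMT : M = (fun p : ℝ × (ℝ × (Fin d → ℝ)) =>
            (α₀ + α₁ * γ₀) + α₁ * γ₁ * p.2.1 + (α₁ * ∑ i, γ₂ i * p.2.2 i
              + ∑ i, α₂ i * p.2.2 i) + p.1) ∘ T := by
          funext ω
          simp only [Function.comp_apply, hTdef, hOdef, hSdef, hM, hA]
          ring
        rw [hMT, ← MeasurableSpace.comap_comp]
        refine MeasurableSpace.comap_mono (Measurable.comap_le ?_)
        refine (((measurable_const.add ((measurable_fst.comp measurable_snd).const_mul _)).add
          ((Finset.measurable_sum _ (fun i _ => by fun_prop)).const_mul α₁ |>.add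
          (Finset.measurable_sum _ (fun i _ => by fun_prop)))).add measurable_fst)
      · have h1 : W = (fun p : ℝ × (ℝ × (Fin d → ℝ)) => p.2.2) ∘ T := rfl
        rw [h1, ← MeasurableSpace.comap_comp]
        exact MeasurableSpace.comap_mono (measurable_snd.comp measurable_snd).comap_le
    exact indep_mono_right hRT hle
  -- integrability
  have hRInt : Integrable R P := integrable_of_gaussian_law hRMeas.aemeasurable hmapR
  have hRmean : ∫ ω, R ω ∂P = 0 := integral_of_gaussian_law hRMeas.aemeasurable hmapR
  have hR2Int : Integrable (fun ω => R ω ^ 2) P :=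
    integrable_sq_of_gaussian_law hRMeas.aemeasurable hmapR
  have hR2mean : ∫ ω, R ω ^ 2 ∂P = σα2 * σγ2 / (α₁ ^ 2 * σγ2 + σα2) :=
    integral_sq_of_gaussian_law hRMeas.aemeasurable hmapR
  have hεAInt : Integrable εA P := integrable_of_gaussian_law hεAMeas.aemeasurable hlawA
  have hAstarInt : Integrable Astar P := hAstarL2.integrable one_le_two
  have hWiInt : ∀ i, Integrable (fun ω => W ω i) P := by
    intro i
    have := (ContinuousLinearMap.proj (R := ℝ) (φ := fun _ : Fin d => ℝ) i).integrable_comp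
      (hWL2.integrable one_le_two)
    exact this
  have hAInt : Integrable A P := by
    rw [hA]
    exact (((integrable_const γ₀).add (hAstarInt.const_mul γ₁)).add
      (integrable_finset_sum _ (fun i _ => (hWiInt i).const_mul (γ₂ i)))).add hεAInt
  set B : Ω → ℝ := fun ω => A ω - R ω with hBdef
  have hBInt : Integrable B P := hAInt.sub hRInt
  -- G-measurability of B
  have hAstarG : Measurable[G] Astar :=
    Measurable.of_comap_le (by rw [hG]; exact le_trans le_sup_left le_sup_left)
  have hMG : Measurable[G] M :=
    Measurable.of_comap_le (by rw [hG]; exact le_trans le_sup_right le_sup_left)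
  have hWG : Measurable[G] W := Measurable.of_comap_le (by rw [hG]; exact le_sup_right)
  have hWiG : ∀ i, Measurable[G] (fun ω => W ω i) :=
    fun i => (measurable_pi_apply i).comp hWG
  have hBobs : B = fun ω => γ₀ + γ₁ * Astar ω + (∑ i, γ₂ i * W ω i)
      + k * (M ω - (α₀ + α₁ * γ₀) - α₁ * γ₁ * Astar ω
        - (α₁ * ∑ i, γ₂ i * W ω i + ∑ i, α₂ i * W ω i)) := by
    funext ω
    simp only [hBdef, hRdef, hSdef, hA, hM]
    ring
  have hBsm : StronglyMeasurable[G] B := by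
    rw [hBobs]
    refine Measurable.stronglyMeasurable ?_
    have hsum1 : Measurable[G] (fun ω => ∑ i, γ₂ i * W ω i) :=
      Finset.measurable_sum _ (fun i _ => (hWiG i).const_mul (γ₂ i))
    have hsum2 : Measurable[G] (fun ω => ∑ i, α₂ i * W ω i) :=
      Finset.measurable_sum _ (fun i _ => (hWiG i).const_mul (α₂ i))
    exact ((measurable_const.add (hAstarG.const_mul γ₁)).add hsum1).add
      (((((hMG.sub measurable_const).sub (hAstarG.const_mul (α₁ * γ₁)))).sub
        ((hsum1.const_mul α₁).add hsum2)).const_mul k)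
  -- conditional expectation computations
  have hRsm : StronglyMeasurable[MeasurableSpace.comap R inferInstance] R :=
    (Measurable.of_comap_le le_rfl).stronglyMeasurable
  have hcondR : P[R|G] =ᵐ[P] fun _ => (0:ℝ) := by
    have h := condExp_indep_eq hRMeas.comap_le hGle hRsm hindRG
    rw [hRmean] at h
    exact h
  have hcondB : P[B|G] = B := condExp_of_stronglyMeasurable hGle hBsm hBInt
  have hABR : A = fun ω => B ω + R ω := by
    funext ω
    simp only [hBdef]
    ring
  have hcondA : P[A|G] =ᵐ[P] B := by
    have h1 : P[A|G] =ᵐ[P] P[B|G] + P[R|G] := by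
      rw (occs := .pos [1]) [hABR]
      exact condExp_add hBInt hRInt G
    refine h1.trans ?_
    rw [hcondB]
    filter_upwards [hcondR] with ω hω
    simp only [Pi.add_apply, hω, add_zero]
  have hresid : (fun ω => (A ω - (P[A|G]) ω) ^ 2) =ᵐ[P] fun ω => R ω ^ 2 := by
    filter_upwards [hcondA] with ω hω
    rw [hω]
    simp only [hBdef]
    ring
  have hR2sm : StronglyMeasurable[MeasurableSpace.comap R inferInstance]
      (fun ω => R ω ^ 2) :=
    ((Measurable.of_comap_le le_rfl).pow_const 2).stronglyMeasurable
  have hfinal := condExp_indep_eq hRMeas.comap_le hGle hR2sm hindRG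
  rw [hR2mean] at hfinal
  exact (condExp_congr_ae hresid).trans hfinal

/-- Under the measurement error model `A = γ₀ + γ₁ A* + γ₂ᵀW + ε_A`
and mediator model `M = α₀ + α₁ A + α₂ᵀW + ε_M` with independent normal errors,
the conditional variance of the true exposure `A` given the observed data `(A*, M, W)`
is constant: almost surely `E[(A − E[A | A*, M, W])² | A*, M, W] = σα²σγ²/D`,
where `D = α₁²σγ² + σα²`. -/
theorem stmt_8
    {Ω : Type*} [m0 : MeasurableSpace Ω] (P : Measure Ω) [IsProbabilityMeasure P]
    (d : ℕ) (Astar : Ω → ℝ) (W : Ω → Fin d → ℝ) (εA εM : Ω → ℝ)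
    (hAstarMeas : Measurable Astar) (hWMeas : Measurable W)
    (hεAMeas : Measurable εA) (hεMMeas : Measurable εM)
    (hAstarL2 : MemLp Astar 2 P) (hWL2 : MemLp W 2 P)
    (σγ2 σα2 : ℝ) (hσγ : 0 < σγ2) (hσα : 0 < σα2)
    (hlawA : P.map εA = gaussianReal 0 ⟨σγ2, hσγ.le⟩)
    (hlawM : P.map εM = gaussianReal 0 ⟨σα2, hσα.le⟩)
    (hindEps : IndepFun εA εM P)
    (hindObs : IndepFun (fun ω => (εA ω, εM ω)) (fun ω => (Astar ω, W ω)) P)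
    (γ₀ γ₁ α₀ α₁ : ℝ) (γ₂ α₂ : Fin d → ℝ)
    (A M : Ω → ℝ)
    (hA : A = fun ω => γ₀ + γ₁ * Astar ω + (∑ i, γ₂ i * W ω i) + εA ω)
    (hM : M = fun ω => α₀ + α₁ * A ω + (∑ i, α₂ i * W ω i) + εM ω)
    (D : ℝ) (hD : D = α₁ ^ 2 * σγ2 + σα2)
    (G : MeasurableSpace Ω)
    (hG : G = MeasurableSpace.comap Astar inferInstance ⊔
      MeasurableSpace.comap M inferInstance ⊔ MeasurableSpace.comap W inferInstance) :
    P[fun ω => (A ω - (P[A | G]) ω) ^ 2 | G] =ᵐ[P] fun _ => σα2 * σγ2 / D := by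
  exact Stmt8Aux.main (m0 := m0) G P d Astar W εA εM hAstarMeas hWMeas hεAMeas hεMMeas
    hAstarL2 hWL2 σγ2 σα2 hσγ hσα hlawA hlawM hindEps hindObs γ₀ γ₁ α₀ α₁ γ₂ α₂ A M hA hM
    D hD hG
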